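/- Let V be a finite-dimensional real vector space and let k > dim V be a positive integer. Let φ₁, …, φ_k be affine functions V → ℝ and b₁, …, b_k ∈ ℝ. Then there exist a₁, …, a_k ∈ {0,1} such that ⋂_{j=1}^k W_j(a_j) = ∅, where W_j(1) = {v ∈ V : φ_j(v) < b_j} and W_j(0) = {v ∈ V : φ_j(v) ≥ b_j}. -/

import Mathlib

noncomputable section

private lemma affine_halfspaces_master
    (V : Type*) [AddCommGroup V] [Module ℝ V]
    (k : ℕ) (φ : Fin k → V → ℝ) (b : Fin k → ℝ)
    (l : Fin k → V →ₗ[ℝ] ℝ) (c : Fin k → ℝ)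
    (hlc : ∀ j, φ j = fun v => l j v + c j)
    (t : Fin k → ℝ) (hts : ∑ j, t j • l j = 0)
    (hcase : (∑ j, t j * (c j - b j)) < 0 ∨
      ((∑ j, t j * (c j - b j)) = 0 ∧ ∃ i, 0 < t i)) :
    ∃ a : Fin k → Bool,
      (⋂ j : Fin k,
        (if a j then {v : V | φ j v < b j} else {v : V | b j ≤ φ j v})) = ∅ := by
  have hkey : ∀ v : V, ∑ j, t j * (φ j v - b j) = ∑ j, t j * (c j - b j) := by
    intro v
    have h0 : (∑ j, t j • l j) v = 0 := by rw [hts]; rfl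
    have h1 : ∑ j, t j * l j v = 0 := by
      simpa [LinearMap.sum_apply, LinearMap.smul_apply, smul_eq_mul] using h0
    calc ∑ j, t j * (φ j v - b j)
        = ∑ j, (t j * l j v + t j * (c j - b j)) := by
          refine Finset.sum_congr rfl fun j _ => ?_
          rw [hlc j]; ring
      _ = (∑ j, t j * l j v) + ∑ j, t j * (c j - b j) := Finset.sum_add_distrib
      _ = ∑ j, t j * (c j - b j) := by rw [h1, zero_add]
  rcases hcase with hs | ⟨hs, i, hi⟩
  · refine ⟨fun j => decide (t j < 0), ?_⟩
    rw [Set.eq_empty_iff_forall_notMem]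
    intro v hv
    have hterm : ∀ j, 0 ≤ t j * (φ j v - b j) := by
      intro j
      have hj := Set.mem_iInter.mp hv j
      by_cases h : t j < 0 <;> simp [h] at hj
      · nlinarith
      · push_neg at h
        nlinarith
    have : (0:ℝ) ≤ ∑ j, t j * (φ j v - b j) := Finset.sum_nonneg (fun j _ => hterm j)
    rw [hkey v] at this
    linarith
  · refine ⟨fun j => decide (0 < t j), ?_⟩
    rw [Set.eq_empty_iff_forall_notMem]
    intro v hv
    have hterm : ∀ j, t j * (φ j v - b j) ≤ 0 := by
      intro j
      have hj := Set.mem_iInter.mp hv j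
      by_cases h : 0 < t j <;> simp [h] at hj
      · nlinarith
      · push_neg at h
        nlinarith
    have hstrict : t i * (φ i v - b i) < 0 := by
      have hj := Set.mem_iInter.mp hv i
      simp [hi] at hj
      nlinarith
    have hlt : ∑ j, t j * (φ j v - b j) < 0 := by
      have := Finset.sum_lt_sum (f := fun j => t j * (φ j v - b j))
        (g := fun _ => (0 : ℝ)) (fun j _ => hterm j)
        ⟨i, Finset.mem_univ i, hstrict⟩
      simpa using this
    rw [hkey v, hs] at hlt
    exact lt_irrefl 0 hlt

/-- Hanfeng Li's lemma: if `V` is a finite-dimensional real vector space,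
`k > dim V`, `φ₁, …, φ_k` are affine functions on `V` and `b₁, …, b_k ∈ ℝ`, then there are
signs `a₁, …, a_k ∈ {0,1}` such that `⋂_j W_j(a_j) = ∅`, where `W_j(1) = {φ_j < b_j}` and
`W_j(0) = {φ_j ≥ b_j}`. -/
theorem affine_halfspaces_empty_intersection
    (V : Type*) [AddCommGroup V] [Module ℝ V] [FiniteDimensional ℝ V]
    (k : ℕ) (hk : Module.finrank ℝ V < k)
    (φ : Fin k → V → ℝ)
    (hφ : ∀ j, ∃ (l : V →ₗ[ℝ] ℝ) (c : ℝ), φ j = fun v => l v + c)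
    (b : Fin k → ℝ) :
    ∃ a : Fin k → Bool,
      (⋂ j : Fin k,
        (if a j then {v : V | φ j v < b j} else {v : V | b j ≤ φ j v})) = ∅ := by
  choose l c hlc using hφ
  have hnli : ¬ LinearIndependent ℝ l := by
    intro h
    have hcard := h.fintype_card_le_finrank
    have hdual : Module.finrank ℝ (V →ₗ[ℝ] ℝ) = Module.finrank ℝ V := by
      simp [Module.finrank_linearMap]
    rw [Fintype.card_fin, hdual] at hcard
    omega
  obtain ⟨t, hts, i, hti⟩ := Fintype.not_linearIndependent_iff.mp hnli
  set s : ℝ := ∑ j, t j * (c j - b j) with hsdef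
  have htsneg : ∑ j, (-t) j • l j = 0 := by
    have hneg := congrArg Neg.neg hts
    rw [neg_zero, ← Finset.sum_neg_distrib] at hneg
    convert hneg using 2 with j
    exact neg_smul (t j) (l j)
  have hsneg : ∑ j, (-t) j * (c j - b j) = -s := by
    simp [hsdef, Finset.sum_neg_distrib]
  rcases lt_trichotomy s 0 with h | h | h
  · exact affine_halfspaces_master V k φ b l c hlc t hts (Or.inl h)
  · rcases lt_or_gt_of_ne hti with hneg | hpos
    · refine affine_halfspaces_master V k φ b l c hlc (-t) htsneg
        (Or.inr ⟨by rw [hsneg, h, neg_zero], i, ?_⟩)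
      simpa using hneg
    · exact affine_halfspaces_master V k φ b l c hlc t hts (Or.inr ⟨h, i, hpos⟩)
  · exact affine_halfspaces_master V k φ b l c hlc (-t) htsneg
      (Or.inl (by rw [hsneg]; linarith))

end
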